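/- For the metric D(x,y) = ∫₀^π d_I(⟨x,u_θ⟩, ⟨y,u_θ⟩) dθ on the open unit disk: if x, y, z ∈ D² and y does NOT lie on the Euclidean segment [x,z], then D(x,z) < D(x,y) + D(y,z) (strict inequality). -/

import Mathlib

open Real MeasureTheory Set

/-- f(t) = t/(1-|t|) -/
noncomputable def f (t : ℝ) : ℝ := t / (1 - |t|)

/-- d_I(s,t) = |f(s) - f(t)| -/
noncomputable def dI (s t : ℝ) : ℝ := |f s - f t|

/-- the unit direction u_θ = (cos θ, sin θ) -/
noncomputable def u (θ : ℝ) : EuclideanSpace ℝ (Fin 2) := WithLp.toLp 2 ![Real.cos θ, Real.sin θ]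

/-- D(x,y) = ∫₀^π d_I(⟨x,u_θ⟩, ⟨y,u_θ⟩) dθ -/
noncomputable def Dmet (x y : EuclideanSpace ℝ (Fin 2)) : ℝ :=
  ∫ θ in (0:ℝ)..π, dI (inner ℝ x (u θ) : ℝ) (inner ℝ y (u θ) : ℝ)

lemma inner_u_eq (x : EuclideanSpace ℝ (Fin 2)) (θ : ℝ) :
    (inner ℝ x (u θ) : ℝ) = x 0 * Real.cos θ + x 1 * Real.sin θ := by
  simp [u, PiLp.inner_apply, Fin.sum_univ_two, RCLike.inner_apply, mul_comm]

lemma norm_u (θ : ℝ) : ‖u θ‖ = 1 := by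
  rw [EuclideanSpace.norm_eq]
  simp [u, Fin.sum_univ_two]

lemma abs_inner_lt {x : EuclideanSpace ℝ (Fin 2)} (hx : ‖x‖ < 1) (θ : ℝ) :
    |(inner ℝ x (u θ) : ℝ)| < 1 := by
  calc |(inner ℝ x (u θ) : ℝ)| ≤ ‖x‖ * ‖u θ‖ := abs_real_inner_le_norm x (u θ)
  _ = ‖x‖ := by rw [norm_u, mul_one]
  _ < 1 := hx

lemma f_lt_f {s t : ℝ} (hs : -1 < s) (ht : t < 1) (hst : s < t) : f s < f t := by
  unfold f
  rcases abs_cases s with ⟨hs1, hs2⟩ | ⟨hs1, hs2⟩ <;>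
    rcases abs_cases t with ⟨ht1, ht2⟩ | ⟨ht1, ht2⟩ <;> rw [hs1, ht1] <;>
    rw [div_lt_div_iff₀ (by linarith) (by linarith)] <;> nlinarith

lemma continuousAt_f {t : ℝ} (ht : |t| < 1) : ContinuousAt f t := by
  have : ContinuousAt (fun s : ℝ => s / (1 - |s|)) t :=
    ContinuousAt.div continuousAt_id
      ((continuous_const.sub continuous_abs).continuousAt)
      (by intro h; rw [sub_eq_zero] at h; simp [← h] at ht)
  exact this

lemma dI_triangle (a b c : ℝ) : dI a c ≤ dI a b + dI b c := abs_sub_le _ _ _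

lemma key_lt {p q r : ℝ} (h1 : q < p) (h2 : q < r) : |p - r| < |p - q| + |q - r| := by
  have e1 : |p - q| = p - q := abs_of_pos (by linarith)
  have e2 : |q - r| = r - q := by rw [abs_sub_comm]; exact abs_of_pos (by linarith)
  rw [e1, e2, abs_sub_lt_iff]; constructor <;> linarith

lemma key_gt {p q r : ℝ} (h1 : p < q) (h2 : r < q) : |p - r| < |p - q| + |q - r| := by
  have := key_lt (p := -p) (q := -q) (r := -r) (by linarith) (by linarith)
  rw [show -p - -r = -(p - r) by ring, show -p - -q = -(p - q) by ring,
    show -q - -r = -(q - r) by ring, abs_neg, abs_neg, abs_neg] at this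
  exact this

lemma dI_strict {a b c : ℝ} (ha : |a| < 1) (hb : |b| < 1) (hc : |c| < 1)
    (h : b ∉ Set.uIcc a c) : dI a c < dI a b + dI b c := by
  rw [Set.mem_uIcc] at h; push_neg at h
  rw [abs_lt] at ha hb hc
  unfold dI
  rcases lt_or_ge b a with hba | hab
  · have hbc : b < c := by
      by_contra hh; push_neg at hh
      exact absurd (h.2 hh) (not_lt.2 hba.le)
    exact key_lt (f_lt_f hb.1 ha.2 hba) (f_lt_f hb.1 hc.2 hbc)
  · have hcb : c < b := h.1 hab
    have hab' : a < b := h.2 hcb.le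
    exact key_gt (f_lt_f ha.1 hb.2 hab') (f_lt_f hc.1 hb.2 hcb)

lemma cont_integrand {x y : EuclideanSpace ℝ (Fin 2)} (hx : ‖x‖ < 1) (hy : ‖y‖ < 1) :
    Continuous (fun θ => dI (inner ℝ x (u θ) : ℝ) (inner ℝ y (u θ) : ℝ)) := by
  have cproj : ∀ w : EuclideanSpace ℝ (Fin 2),
      Continuous (fun θ => (inner ℝ w (u θ) : ℝ)) := by
    intro w
    simp only [inner_u_eq]
    fun_prop
  rw [continuous_iff_continuousAt]
  intro θ
  unfold dI
  have h1 : ContinuousAt (fun θ => f (inner ℝ x (u θ) : ℝ)) θ :=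
    ContinuousAt.comp (f := fun θ : ℝ => (inner ℝ x (u θ) : ℝ)) (g := f)
      (continuousAt_f (abs_inner_lt hx θ)) (cproj x).continuousAt
  have h2 : ContinuousAt (fun θ => f (inner ℝ y (u θ) : ℝ)) θ :=
    ContinuousAt.comp (f := fun θ : ℝ => (inner ℝ y (u θ) : ℝ)) (g := f)
      (continuousAt_f (abs_inner_lt hy θ)) (cproj y).continuousAt
  exact (h1.sub h2).abs

lemma exists_theta_unit {a b : ℝ} (hab : a ^ 2 + b ^ 2 = 1) :
    ∃ θ ∈ Ico 0 π, (Real.cos θ = a ∧ Real.sin θ = b) ∨ (Real.cos θ = -a ∧ Real.sin θ = -b) := by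
  rcases lt_trichotomy b 0 with hb | hb | hb
  · have ha1 : -1 < -a := by nlinarith
    have ha2 : (-a : ℝ) ≤ 1 := by nlinarith
    refine ⟨Real.arccos (-a), ⟨Real.arccos_nonneg _,
      lt_of_le_of_ne (Real.arccos_le_pi _)
        (fun hh => by have := Real.arccos_eq_pi.1 hh; linarith)⟩,
      Or.inr ⟨Real.cos_arccos (by linarith) ha2, ?_⟩⟩
    rw [Real.sin_arccos]
    rw [show 1 - (-a) ^ 2 = b ^ 2 by nlinarith, Real.sqrt_sq_eq_abs, abs_of_neg hb]
  · have : (a - 1) * (a + 1) = 0 := by nlinarith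
    rcases mul_eq_zero.1 this with h | h
    · exact ⟨0, ⟨le_refl _, Real.pi_pos⟩, Or.inl ⟨by rw [Real.cos_zero]; linarith,
        by rw [Real.sin_zero]; linarith⟩⟩
    · exact ⟨0, ⟨le_refl _, Real.pi_pos⟩, Or.inr ⟨by rw [Real.cos_zero]; linarith,
        by rw [Real.sin_zero]; linarith⟩⟩
  · have ha1 : -1 < a := by nlinarith
    have ha2 : (a : ℝ) ≤ 1 := by nlinarith
    refine ⟨Real.arccos a, ⟨Real.arccos_nonneg _,
      lt_of_le_of_ne (Real.arccos_le_pi _)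
        (fun hh => by have := Real.arccos_eq_pi.1 hh; linarith)⟩,
      Or.inl ⟨Real.cos_arccos (by linarith) ha2, ?_⟩⟩
    rw [Real.sin_arccos]
    rw [show 1 - a ^ 2 = b ^ 2 by nlinarith, Real.sqrt_sq_eq_abs, abs_of_pos hb]

lemma neg_mem_uIcc {p q t : ℝ} (h : -t ∈ Set.uIcc (-p) (-q)) : t ∈ Set.uIcc p q := by
  rw [Set.mem_uIcc] at h ⊢
  rcases h with ⟨h1, h2⟩ | ⟨h1, h2⟩
  · exact Or.inr ⟨by linarith, by linarith⟩
  · exact Or.inl ⟨by linarith, by linarith⟩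

lemma smul_mem_uIcc {p q t c : ℝ} (hc : 0 < c) (h : t ∈ Set.uIcc p q) :
    c * t ∈ Set.uIcc (c * p) (c * q) := by
  rw [Set.mem_uIcc] at h ⊢
  rcases h with ⟨h1, h2⟩ | ⟨h1, h2⟩
  · exact Or.inl ⟨by nlinarith, by nlinarith⟩
  · exact Or.inr ⟨by nlinarith, by nlinarith⟩

lemma exists_theta (x y z : EuclideanSpace ℝ (Fin 2))
    (hseg : ¬ ∃ lam ∈ Icc (0:ℝ) 1, y = (1 - lam) • x + lam • z) :
    ∃ θ ∈ Ico 0 π,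
      (inner ℝ y (u θ) : ℝ) ∉ Set.uIcc (inner ℝ x (u θ) : ℝ) (inner ℝ z (u θ) : ℝ) := by
  by_contra hcon
  push_neg at hcon
  apply hseg
  have key : ∀ a b : ℝ, a ^ 2 + b ^ 2 = 1 →
      y 0 * a + y 1 * b ∈ Set.uIcc (x 0 * a + x 1 * b) (z 0 * a + z 1 * b) := by
    intro a b hab
    obtain ⟨θ, hθ, hcs⟩ := exists_theta_unit hab
    have h := hcon θ hθ
    rw [inner_u_eq, inner_u_eq, inner_u_eq] at h
    rcases hcs with ⟨h1, h2⟩ | ⟨h1, h2⟩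
    · rwa [h1, h2] at h
    · rw [h1, h2] at h
      apply neg_mem_uIcc
      rw [show -(y 0 * a + y 1 * b) = y 0 * -a + y 1 * -b by ring,
        show -(x 0 * a + x 1 * b) = x 0 * -a + x 1 * -b by ring,
        show -(z 0 * a + z 1 * b) = z 0 * -a + z 1 * -b by ring]
      exact h
  have key2 : ∀ a b : ℝ, a ^ 2 + b ^ 2 ≠ 0 →
      y 0 * a + y 1 * b ∈ Set.uIcc (x 0 * a + x 1 * b) (z 0 * a + z 1 * b) := by
    intro a b hab
    have hpos : 0 < a ^ 2 + b ^ 2 := lt_of_le_of_ne (by positivity) (Ne.symm hab)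
    set n := Real.sqrt (a ^ 2 + b ^ 2) with hn
    have hnpos : 0 < n := Real.sqrt_pos.2 hpos
    have hn2 : n ^ 2 = a ^ 2 + b ^ 2 := Real.sq_sqrt hpos.le
    have h := key (a / n) (b / n) (by rw [div_pow, div_pow, ← add_div, hn2]; exact div_self hab)
    have h2 := smul_mem_uIcc hnpos h
    have e : ∀ w : EuclideanSpace ℝ (Fin 2),
        n * (w 0 * (a / n) + w 1 * (b / n)) = w 0 * a + w 1 * b := by
      intro w; field_simp
    rwa [e x, e y, e z] at h2
  by_cases hxz : x = z
  · have h0 := key2 1 0 (by norm_num)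
    have h1 := key2 0 1 (by norm_num)
    subst hxz
    simp only [Set.uIcc_self, Set.mem_singleton_iff] at h0 h1
    have hyx : y = x := by
      ext i; fin_cases i
      · simpa using h0
      · simpa using h1
    exact ⟨0, ⟨le_refl _, zero_le_one⟩, by rw [hyx]; simp⟩
  · set v0 := z 0 - x 0 with hv0
    set v1 := z 1 - x 1 with hv1
    have hv : v0 ^ 2 + v1 ^ 2 ≠ 0 := by
      intro hc
      apply hxz
      have h0 : v0 = 0 := by nlinarith [sq_nonneg v0, sq_nonneg v1]
      have h1 : v1 = 0 := by nlinarith [sq_nonneg v0, sq_nonneg v1]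
      ext i; fin_cases i
      · simp only [hv0] at h0; simpa using (by linarith : z 0 = x 0).symm
      · simp only [hv1] at h1; simpa using (by linarith : z 1 = x 1).symm
    have hvpos : 0 < v0 ^ 2 + v1 ^ 2 := lt_of_le_of_ne (by positivity) (Ne.symm hv)
    have hperp := key2 (-v1) v0 (by intro hc; apply hv; nlinarith)
    have hzx : z 0 * -v1 + z 1 * v0 = x 0 * -v1 + x 1 * v0 := by
      simp only [hv0, hv1]; ring
    rw [hzx, Set.uIcc_self, Set.mem_singleton_iff] at hperp
    have hE : (y 0 - x 0) * v1 = (y 1 - x 1) * v0 := by nlinarith [hperp]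
    have hpar := key2 v0 v1 hv
    set t := ((y 0 - x 0) * v0 + (y 1 - x 1) * v1) / (v0 ^ 2 + v1 ^ 2) with ht
    have ht0 : y 0 - x 0 = t * v0 := by
      rw [ht]; field_simp; linear_combination v1 * hE
    have ht1 : y 1 - x 1 = t * v1 := by
      rw [ht]; field_simp; linear_combination (-v0) * hE
    have hy0 : y 0 * v0 + y 1 * v1 = (x 0 * v0 + x 1 * v1) + t * (v0 ^ 2 + v1 ^ 2) := by
      linear_combination v0 * ht0 + v1 * ht1
    have hz0 : z 0 * v0 + z 1 * v1 = (x 0 * v0 + x 1 * v1) + (v0 ^ 2 + v1 ^ 2) := by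
      simp only [hv0, hv1] at *; ring
    rw [hy0, hz0, Set.mem_uIcc] at hpar
    have htIcc : t ∈ Icc (0:ℝ) 1 := by
      rcases hpar with ⟨h1, h2⟩ | ⟨h1, h2⟩
      · constructor <;> nlinarith
      · constructor <;> nlinarith
    refine ⟨t, htIcc, ?_⟩
    ext i; fin_cases i
    · show y 0 = ((1 - t) • x + t • z) 0
      simp only [PiLp.add_apply, PiLp.smul_apply, smul_eq_mul]
      simp only [hv0] at ht0; linarith [ht0]
    · show y 1 = ((1 - t) • x + t • z) 1
      simp only [PiLp.add_apply, PiLp.smul_apply, smul_eq_mul]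
      simp only [hv1] at ht1; linarith [ht1]

theorem Dmet_strict_triangle_off_segment (x y z : EuclideanSpace ℝ (Fin 2))
    (hx : ‖x‖ < 1) (hy : ‖y‖ < 1) (hz : ‖z‖ < 1)
    (hseg : ¬ ∃ lam ∈ Icc (0:ℝ) 1, y = (1 - lam) • x + lam • z) :
    Dmet x z < Dmet x y + Dmet y z := by
  obtain ⟨θ₀, hθ₀, hnot⟩ := exists_theta x y z hseg
  have cxz := cont_integrand hx hz
  have cxy := cont_integrand hx hy
  have cyz := cont_integrand hy hz
  have hlt : (∫ θ in (0:ℝ)..π, dI (inner ℝ x (u θ) : ℝ) (inner ℝ z (u θ) : ℝ)) <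
      ∫ θ in (0:ℝ)..π,
        (dI (inner ℝ x (u θ) : ℝ) (inner ℝ y (u θ) : ℝ) +
          dI (inner ℝ y (u θ) : ℝ) (inner ℝ z (u θ) : ℝ)) := by
    apply intervalIntegral.integral_lt_integral_of_continuousOn_of_le_of_exists_lt Real.pi_pos
      cxz.continuousOn (cxy.add cyz).continuousOn
    · intro θ _
      exact dI_triangle _ _ _
    · exact ⟨θ₀, ⟨hθ₀.1, hθ₀.2.le⟩,
        dI_strict (abs_inner_lt hx θ₀) (abs_inner_lt hy θ₀) (abs_inner_lt hz θ₀) hnot⟩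
  rwa [intervalIntegral.integral_add (cxy.intervalIntegrable _ _)
    (cyz.intervalIntegrable _ _)] at hlt
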